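/- Let u : ℝⁿ → ℝᵖ, w : ℝᵐ → ℝ^q, h : ℝᵖ × ℝ^q → ℝ all be twice continuously differentiable, with ℓ(zx,zy) = h(u(zx), w(zy)). Suppose at (zx*, zy*): ∇_{zx} ℓ = 0, ∇_{zy} ℓ = 0, the Hessian ∂²ℓ/∂zx² is negative semidefinite, ∂²ℓ/∂zy² is positive semidefinite, and both Jacobians Du(zx*), Dw(zy*) are surjective linear maps. Then at the point (u*, w*) = (u(zx*), w(zy*)): ∇_u h = 0, ∇_w h = 0, ∂²h/∂u² is negative semidefinite, and ∂²h/∂w² is positive semidefinite. -/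

import Mathlib

open ContinuousLinearMap

lemma aux_first {D E : Type*} [NormedAddCommGroup D] [NormedSpace ℝ D]
    [NormedAddCommGroup E] [NormedSpace ℝ E] {F : E → ℝ} {u : D → E}
    (hF : Differentiable ℝ F) (hu : Differentiable ℝ u) (zx : D)
    (hs : Function.Surjective (fderiv ℝ u zx))
    (hc : fderiv ℝ (fun x => F (u x)) zx = 0) : fderiv ℝ F (u zx) = 0 := by
  have hcomp : fderiv ℝ (fun x => F (u x)) zx
      = (fderiv ℝ F (u zx)).comp (fderiv ℝ u zx) :=
    fderiv_comp zx (hF (u zx)) (hu zx)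
  ext a
  obtain ⟨v, hv⟩ := hs a
  have : ((fderiv ℝ F (u zx)).comp (fderiv ℝ u zx)) v = 0 := by
    rw [← hcomp, hc]; rfl
  rw [ContinuousLinearMap.comp_apply, hv] at this
  simpa using this

lemma aux_second {D E : Type*} [NormedAddCommGroup D] [NormedSpace ℝ D]
    [NormedAddCommGroup E] [NormedSpace ℝ E] {F : E → ℝ} {u : D → E}
    (hF : ContDiff ℝ 2 F) (hu : ContDiff ℝ 2 u) (zx : D)
    (hcrit : fderiv ℝ F (u zx) = 0) (v : D) :
    fderiv ℝ (fun x => fderiv ℝ (fun x' => F (u x')) x) zx v v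
      = fderiv ℝ (fun a => fderiv ℝ F a) (u zx) (fderiv ℝ u zx v) (fderiv ℝ u zx v) := by
  have hFd : Differentiable ℝ F := hF.differentiable (by norm_num)
  have hud : Differentiable ℝ u := hu.differentiable (by norm_num)
  have heq : (fun x => fderiv ℝ (fun x' => F (u x')) x)
      = fun x => (fderiv ℝ F (u x)).comp (fderiv ℝ u x) := by
    funext x; exact fderiv_comp x (hFd (u x)) (hud x)
  rw [heq]
  have hdF' : ContDiff ℝ 1 (fun a => fderiv ℝ F a) := hF.fderiv_right (by norm_num)
  have hdu' : ContDiff ℝ 1 (fun x => fderiv ℝ u x) := hu.fderiv_right (by norm_num)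
  have hc : DifferentiableAt ℝ (fun x => fderiv ℝ F (u x)) zx :=
    ((hdF'.differentiable one_ne_zero) (u zx)).comp zx (hud zx)
  have hd : DifferentiableAt ℝ (fun x => fderiv ℝ u x) zx :=
    (hdu'.differentiable one_ne_zero) zx
  rw [fderiv_clm_comp hc hd]
  have hcd : fderiv ℝ (fun x => fderiv ℝ F (u x)) zx
      = (fderiv ℝ (fderiv ℝ F) (u zx)).comp (fderiv ℝ u zx) :=
    fderiv_comp zx ((hdF'.differentiable one_ne_zero) (u zx)) (hud zx)
  simp [hcd, hcrit]

/-- Full Proposition 1 (disentangled case). For `ℓ (zx, zy) = h (u zx, w zy)`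
with everything C², if `(zx⋆, zy⋆)` is a second-order saddle point of `ℓ` (vanishing partial
gradients, NSD Hessian in `zx`, PSD Hessian in `zy`) and the Jacobians `Du (zx⋆)`, `Dw (zy⋆)`
are surjective, then `(u zx⋆, w zy⋆)` is a second-order saddle point of `h`. -/
theorem stmt_6 {n m p q : ℕ}
    (u : (Fin n → ℝ) → (Fin p → ℝ)) (w : (Fin m → ℝ) → (Fin q → ℝ))
    (h : (Fin p → ℝ) × (Fin q → ℝ) → ℝ)
    (hu : ContDiff ℝ 2 u) (hw : ContDiff ℝ 2 w) (hh : ContDiff ℝ 2 h)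
    (ℓ : (Fin n → ℝ) × (Fin m → ℝ) → ℝ) (hℓ : ℓ = fun z => h (u z.1, w z.2))
    (zx : Fin n → ℝ) (zy : Fin m → ℝ)
    (hcrit₁ : fderiv ℝ (fun x => ℓ (x, zy)) zx = 0)
    (hcrit₂ : fderiv ℝ (fun y => ℓ (zx, y)) zy = 0)
    (hnsd : ∀ v : Fin n → ℝ,
      fderiv ℝ (fun x => fderiv ℝ (fun x' => ℓ (x', zy)) x) zx v v ≤ 0)
    (hpsd : ∀ v : Fin m → ℝ,
      0 ≤ fderiv ℝ (fun y => fderiv ℝ (fun y' => ℓ (zx, y')) y) zy v v)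
    (hsurju : Function.Surjective (fderiv ℝ u zx))
    (hsurjw : Function.Surjective (fderiv ℝ w zy)) :
    fderiv ℝ (fun u' => h (u', w zy)) (u zx) = 0 ∧
    fderiv ℝ (fun w' => h (u zx, w')) (w zy) = 0 ∧
    (∀ a : Fin p → ℝ,
      fderiv ℝ (fun u' => fderiv ℝ (fun u'' => h (u'', w zy)) u') (u zx) a a ≤ 0) ∧
    (∀ b : Fin q → ℝ,
      0 ≤ fderiv ℝ (fun w' => fderiv ℝ (fun w'' => h (u zx, w'')) w') (w zy) b b) := by
  subst hℓ
  set F : (Fin p → ℝ) → ℝ := fun u' => h (u', w zy) with hFdef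
  set G : (Fin q → ℝ) → ℝ := fun w' => h (u zx, w') with hGdef
  have hFc : ContDiff ℝ 2 F := hh.comp (contDiff_id.prodMk contDiff_const)
  have hGc : ContDiff ℝ 2 G := hh.comp (contDiff_const.prodMk contDiff_id)
  have hF0 : fderiv ℝ F (u zx) = 0 :=
    aux_first (hFc.differentiable (by norm_num)) (hu.differentiable (by norm_num)) zx hsurju hcrit₁
  have hG0 : fderiv ℝ G (w zy) = 0 :=
    aux_first (hGc.differentiable (by norm_num)) (hw.differentiable (by norm_num)) zy hsurjw hcrit₂
  refine ⟨hF0, hG0, ?_, ?_⟩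
  · intro a
    obtain ⟨v, hv⟩ := hsurju a
    have := aux_second hFc hu zx hF0 v
    rw [hv] at this
    rw [← this]
    exact hnsd v
  · intro b
    obtain ⟨v, hv⟩ := hsurjw b
    have := aux_second hGc hw zy hG0 v
    rw [hv] at this
    rw [← this]
    exact hpsd v
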